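/- If F is a finite-potent subspace of End_k(V), i.e. there exists n such that for any φ₁,…,φₙ ∈ F the space φ₁⋯φₙV is finite-dimensional, then every element of F is finite potent and the map tr_V : F → k is k-linear. -/

import Mathlib

/-- An endomorphism is finite potent if some power has finite-dimensional range. -/
def IsFinitePotent {k V : Type*} [Field k] [AddCommGroup V] [Module k V]
    (φ : V →ₗ[k] V) : Prop :=
  ∃ n : ℕ, FiniteDimensional k (LinearMap.range (φ ^ n))

/-- `c` is a value of Tate's trace of `φ`: the ordinary trace of the restriction of `φ` to
any finite-dimensional `φ`-invariant subspace `W` with `φⁿ V ⊆ W` for some `n` equals `c`. -/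
def TateTraceSpec {k V : Type*} [Field k] [AddCommGroup V] [Module k V]
    (φ : V →ₗ[k] V) (c : k) : Prop :=
  ∀ (W : Submodule k V) (hW : ∀ x ∈ W, φ x ∈ W), FiniteDimensional k W →
    (∃ n : ℕ, LinearMap.range (φ ^ n) ≤ W) →
    LinearMap.trace k W (φ.restrict hW) = c

open Classical in
/-- Tate's trace of a finite potent endomorphism. -/
noncomputable def tateTrace {k V : Type*} [Field k] [AddCommGroup V] [Module k V]
    (φ : V →ₗ[k] V) : k :=
  if h : ∃ c, TateTraceSpec φ c then h.choose else 0


section TateAux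

open LinearMap Submodule

variable {k V : Type*} [Field k] [AddCommGroup V] [Module k V]


variable {k V : Type*} [Field k] [AddCommGroup V] [Module k V]

private lemma map_pow_invariant (f : V →ₗ[k] V) (m : ℕ) (U : Submodule k V)
    (hU : ∀ x ∈ U, f x ∈ U) : ∀ x ∈ U.map (f ^ m), f x ∈ U.map (f ^ m) := by
  rintro x ⟨u, hu, rfl⟩
  exact ⟨f u, hU u hu, by rw [← Module.End.mul_apply, ← Module.End.mul_apply, pow_mul_comm']⟩

private lemma map_pow_le (f : V →ₗ[k] V) (m : ℕ) (U : Submodule k V)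
    (hU : ∀ x ∈ U, f x ∈ U) : U.map (f ^ m) ≤ U := by
  induction m with
  | zero => simp [Module.End.one_eq_id, Submodule.map_id]
  | succ m ih =>
    rw [pow_succ, Module.End.mul_eq_comp, Submodule.map_comp]
    exact le_trans (Submodule.map_mono (Submodule.map_le_iff_le_comap.mpr
      (fun x hx => Submodule.mem_comap.mpr (hU x hx)))) ih

private lemma map_pow_antitone (f : V →ₗ[k] V) (U : Submodule k V)
    (hU : ∀ x ∈ U, f x ∈ U) : Antitone (fun m => U.map (f ^ m)) := by
  apply antitone_nat_of_succ_le
  intro m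
  show U.map (f ^ (m + 1)) ≤ U.map (f ^ m)
  rw [pow_succ, Module.End.mul_eq_comp, Submodule.map_comp]
  exact Submodule.map_mono (Submodule.map_le_iff_le_comap.mpr
    (fun x hx => Submodule.mem_comap.mpr (hU x hx)))

private lemma trace_restrict_congr (f : V →ₗ[k] V) {p q : Submodule k V} (h : p = q)
    (hp : ∀ x ∈ p, f x ∈ p) (hq : ∀ x ∈ q, f x ∈ q) [FiniteDimensional k p] :
    trace k p (f.restrict hp) = trace k q (f.restrict hq) := by
  subst h; rfl

private lemma trace_restrict_map (f : V →ₗ[k] V) (U : Submodule k V)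
    (hU : ∀ x ∈ U, f x ∈ U) [FiniteDimensional k U] (hU' : ∀ x ∈ U.map f, f x ∈ U.map f) :
    trace k U (f.restrict hU) = trace k (U.map f) (f.restrict hU') := by
  haveI : FiniteDimensional k (U.map f) :=
    Submodule.finiteDimensional_of_le (Submodule.map_le_iff_le_comap.mpr (fun x hx => hU x hx))
  let A : U →ₗ[k] U.map f :=
    LinearMap.codRestrict (U.map f) (f.domRestrict U) (fun x => ⟨x, x.2, rfl⟩)
  let B : (U.map f) →ₗ[k] U :=
    Submodule.inclusion (Submodule.map_le_iff_le_comap.mpr (fun x hx => hU x hx))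
  have h1 : B ∘ₗ A = f.restrict hU := rfl
  have h2 : A ∘ₗ B = f.restrict hU' := rfl
  rw [← h1, ← h2, trace_comp_comm']

private lemma trace_restrict_map_pow (f : V →ₗ[k] V) (U : Submodule k V)
    (hU : ∀ x ∈ U, f x ∈ U) [FiniteDimensional k U] (m : ℕ) :
    trace k U (f.restrict hU) =
      trace k (U.map (f ^ m)) (f.restrict (map_pow_invariant f m U hU)) := by
  induction m with
  | zero => exact trace_restrict_congr f (by simp [Module.End.one_eq_id, Submodule.map_id]) hU _
  | succ m ih =>
    haveI : FiniteDimensional k (U.map (f ^ m)) :=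
      Submodule.finiteDimensional_of_le (map_pow_le f m U hU)
    rw [ih, trace_restrict_map f (U.map (f ^ m)) (map_pow_invariant f m U hU)
      (by
        intro x hx
        have : (U.map (f ^ m)).map f = U.map (f ^ (m + 1)) := by
          rw [pow_succ', Module.End.mul_eq_comp, Submodule.map_comp]
        rw [this] at hx ⊢
        exact map_pow_invariant f (m + 1) U hU x hx)]
    exact trace_restrict_congr f
      (by rw [pow_succ', Module.End.mul_eq_comp, Submodule.map_comp]) _ _

/-- Well-definedness: traces on any two admissible subspaces agree. -/
private lemma trace_restrict_eq_trace_restrict (f : V →ₗ[k] V)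
    (W₁ W₂ : Submodule k V) (h₁ : ∀ x ∈ W₁, f x ∈ W₁) (h₂ : ∀ x ∈ W₂, f x ∈ W₂)
    [FiniteDimensional k W₁] [FiniteDimensional k W₂]
    {n₁ n₂ : ℕ} (hr₁ : range (f ^ n₁) ≤ W₁) (hr₂ : range (f ^ n₂) ≤ W₂) :
    trace k W₁ (f.restrict h₁) = trace k W₂ (f.restrict h₂) := by
  set U : Submodule k V := W₁ ⊔ W₂ with hUdef
  have hU : ∀ x ∈ U, f x ∈ U := by
    intro x hx
    rcases Submodule.mem_sup.mp hx with ⟨y, hy, z, hz, rfl⟩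
    rw [map_add]
    exact Submodule.add_mem_sup (h₁ y hy) (h₂ z hz)
  haveI : FiniteDimensional k U := Submodule.finiteDimensional_sup W₁ W₂
  set n := n₁ + n₂ with hn
  have hr₁' : range (f ^ n) ≤ W₁ := by
    rw [hn, pow_add, Module.End.mul_eq_comp]
    exact le_trans (LinearMap.range_comp_le_range _ _) hr₁
  have hr₂' : range (f ^ n) ≤ W₂ := by
    rw [hn, add_comm, pow_add, Module.End.mul_eq_comp]
    exact le_trans (LinearMap.range_comp_le_range _ _) hr₂
  -- stabilization index
  set d : ℕ → ℕ := fun m => Module.finrank k (U.map (f ^ m)) with hd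
  have hnonempty : (Set.range d).Nonempty := ⟨d 0, 0, rfl⟩
  obtain ⟨N, hN⟩ := Nat.sInf_mem hnonempty
  have dant : ∀ a b : ℕ, a ≤ b → d b ≤ d a := by
    intro a b hab
    haveI : FiniteDimensional k (U.map (f ^ a)) :=
      Submodule.finiteDimensional_of_le (map_pow_le f a U hU)
    exact Submodule.finrank_mono (map_pow_antitone f U hU hab)
  have hstab : U.map (f ^ (N + n)) = U.map (f ^ N) := by
    haveI : FiniteDimensional k (U.map (f ^ N)) :=
      Submodule.finiteDimensional_of_le (map_pow_le f N U hU)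
    apply Submodule.eq_of_le_of_finrank_eq (map_pow_antitone f U hU (Nat.le_add_right N n))
    have h1 : d (N + n) ≤ d N := dant N (N + n) (Nat.le_add_right N n)
    have h2 : d N ≤ d (N + n) := hN ▸ Nat.sInf_le ⟨N + n, rfl⟩
    exact le_antisymm h1 h2
  -- key: map f^N W_i = map f^N U
  have key : ∀ (W : Submodule k V), W ≤ U → range (f ^ n) ≤ W →
      W.map (f ^ N) = U.map (f ^ N) := by
    intro W hWU hrW
    apply le_antisymm (Submodule.map_mono hWU)
    rw [← hstab, pow_add, Module.End.mul_eq_comp, Submodule.map_comp]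
    exact Submodule.map_mono (le_trans (LinearMap.map_le_range) hrW)
  have e₁ : W₁.map (f ^ N) = U.map (f ^ N) := key W₁ le_sup_left hr₁'
  have e₂ : W₂.map (f ^ N) = U.map (f ^ N) := key W₂ le_sup_right hr₂'
  rw [trace_restrict_map_pow f W₁ h₁ N, trace_restrict_map_pow f W₂ h₂ N,
    trace_restrict_congr f e₁ _ (e₁ ▸ map_pow_invariant f N W₁ h₁),
    trace_restrict_congr f e₂ _ (e₂ ▸ map_pow_invariant f N W₂ h₂)]

private lemma tateTrace_eq (f : V →ₗ[k] V) (W : Submodule k V) (hW : ∀ x ∈ W, f x ∈ W)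
    [FiniteDimensional k W] (n : ℕ) (hr : range (f ^ n) ≤ W) :
    tateTrace f = trace k W (f.restrict hW) := by
  have hspec : TateTraceSpec f (trace k W (f.restrict hW)) := by
    rintro W' hW' hfd' ⟨n', hr'⟩
    exact trace_restrict_eq_trace_restrict f W' W hW' hW hr' hr
  have hex : ∃ c, TateTraceSpec f c := ⟨_, hspec⟩
  unfold tateTrace
  rw [dif_pos hex]
  exact (hex.choose_spec W hW ‹_› ⟨n, hr⟩).symm

private lemma exists_word_space {ι : Type} [Fintype ι] [Nonempty ι] (n : ℕ)
    (f : ι → (V →ₗ[k] V))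
    (hfd : ∀ w : Fin n → ι, FiniteDimensional k (range (List.ofFn (fun j => f (w j))).prod)) :
    ∃ W : Submodule k V, FiniteDimensional k W ∧
      (∀ i, ∀ x ∈ W, f i x ∈ W) ∧ (∀ i, range ((f i) ^ n) ≤ W) := by
  classical
  set W : Submodule k V := ⨆ w : Fin n → ι, range (List.ofFn (fun j => f (w j))).prod with hWdef
  haveI : ∀ w : Fin n → ι, FiniteDimensional k (range (List.ofFn (fun j => f (w j))).prod) := hfd
  refine ⟨W, ?_, ?_, ?_⟩
  · exact Submodule.finiteDimensional_iSup _
  · intro i x hx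
    suffices hsuff : W ≤ Submodule.comap (f i) W from hsuff hx
    cases n with
    | zero =>
      have htop : ⊤ ≤ W := by
        refine le_trans ?_ (le_iSup _ (fun j => Classical.arbitrary ι))
        simp [List.ofFn_zero, LinearMap.range_eq_top, Module.End.one_eq_id]
      exact fun y _ => Submodule.mem_comap.mpr (htop trivial)
    | succ m =>
      apply iSup_le
      intro w
      rw [← Submodule.map_le_iff_le_comap, ← LinearMap.range_comp]
      have hsplit : (List.ofFn (fun j : Fin (m + 1) => f (w j))).prod =
          (List.ofFn (fun j : Fin m => f (w j.castSucc))).prod * f (w (Fin.last m)) := by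
        rw [List.ofFn_succ']
        simp [List.prod_concat]
      have hmul : (f i) ∘ₗ (List.ofFn (fun j : Fin (m + 1) => f (w j))).prod =
          ((f i) * (List.ofFn (fun j : Fin m => f (w j.castSucc))).prod) *
            f (w (Fin.last m)) := by
        rw [hsplit, ← Module.End.mul_eq_comp, mul_assoc]
      rw [hmul]
      set w' : Fin (m + 1) → ι := Fin.cons i (fun j => w j.castSucc) with hw'
      refine le_trans ?_ (le_iSup (fun u : Fin (m+1) → ι =>
        range (List.ofFn (fun j => f (u j))).prod) w')
      have hcons : (List.ofFn (fun j : Fin (m + 1) => f (w' j))).prod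
          = (f i) * (List.ofFn (fun j : Fin m => f (w j.castSucc))).prod := by
        rw [List.ofFn_succ]
        simp [hw', List.prod_cons]
      rw [hcons, Module.End.mul_eq_comp, Module.End.mul_eq_comp, LinearMap.range_comp]
      exact LinearMap.map_le_range
  · intro i
    refine le_trans ?_ (le_iSup _ (fun _ => i))
    rw [show (List.ofFn (fun _ : Fin n => f i)).prod = (f i) ^ n by
      simp [List.ofFn_const, List.prod_replicate]]

end TateAux

open LinearMap Submodule in
theorem tateTrace_linear_on_finitePotent_subspace
    {k V : Type*} [Field k] [AddCommGroup V] [Module k V]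
    (F : Submodule k (V →ₗ[k] V))
    (h : ∃ n : ℕ, ∀ φs : Fin n → (V →ₗ[k] V), (∀ i, φs i ∈ F) →
      FiniteDimensional k (LinearMap.range (List.ofFn φs).prod)) :
    (∀ φ ∈ F, IsFinitePotent φ) ∧
    (∀ φ ∈ F, ∀ ψ ∈ F, tateTrace (φ + ψ) = tateTrace φ + tateTrace ψ) ∧
    (∀ φ ∈ F, ∀ a : k, tateTrace (a • φ) = a * tateTrace φ) := by
  obtain ⟨n, hn⟩ := h
  refine ⟨?_, ?_, ?_⟩
  · intro φ hφ
    refine ⟨n, ?_⟩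
    have hh := hn (fun _ => φ) (fun _ => hφ)
    rwa [show (List.ofFn (fun _ : Fin n => φ)).prod = φ ^ n by
      simp [List.ofFn_const, List.prod_replicate]] at hh
  · intro φ hφ ψ hψ
    set f : Fin 3 → (V →ₗ[k] V) := ![φ, ψ, φ + ψ] with hf
    have hmem : ∀ i, f i ∈ F := by
      intro i
      fin_cases i
      · exact hφ
      · exact hψ
      · exact F.add_mem hφ hψ
    obtain ⟨W, hfd, hinv, hr⟩ :=
      exists_word_space n f (fun w => hn (fun j => f (w j)) (fun j => hmem (w j)))
    haveI := hfd
    have h0 : ∀ x ∈ W, φ x ∈ W := by simpa [hf] using hinv 0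
    have h1 : ∀ x ∈ W, ψ x ∈ W := by simpa [hf] using hinv 1
    have h2 : ∀ x ∈ W, (φ + ψ) x ∈ W := by simpa [hf] using hinv 2
    rw [tateTrace_eq (φ + ψ) W h2 n (by simpa [hf] using hr 2),
        tateTrace_eq φ W h0 n (by simpa [hf] using hr 0),
        tateTrace_eq ψ W h1 n (by simpa [hf] using hr 1)]
    have hre : (φ + ψ).restrict h2 = φ.restrict h0 + ψ.restrict h1 := by
      ext x
      rfl
    rw [hre, map_add]
  · intro φ hφ a
    set f : Fin 2 → (V →ₗ[k] V) := ![φ, a • φ] with hf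
    have hmem : ∀ i, f i ∈ F := by
      intro i
      fin_cases i
      · exact hφ
      · exact F.smul_mem a hφ
    obtain ⟨W, hfd, hinv, hr⟩ :=
      exists_word_space n f (fun w => hn (fun j => f (w j)) (fun j => hmem (w j)))
    haveI := hfd
    have h0 : ∀ x ∈ W, φ x ∈ W := by simpa [hf] using hinv 0
    have h1 : ∀ x ∈ W, (a • φ) x ∈ W := by simpa [hf] using hinv 1
    rw [tateTrace_eq (a • φ) W h1 n (by simpa [hf] using hr 1),
        tateTrace_eq φ W h0 n (by simpa [hf] using hr 0)]
    have hre : (a • φ).restrict h1 = a • (φ.restrict h0) := by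
      ext x
      rfl
    rw [hre, map_smul, smul_eq_mul]
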